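/- Let a, q, m be positive integers with gcd(a, qm) = 1 and gcd(q, m) = 1, and let X ≥ 1. Then Σ_{1≤n≤X, n ≡ a (mod q), gcd(n,m)=1} μ(n)² n²/φ(n)² ≪ min{ X/q + (log 3X)², (X/q + 1)(log log 3X)² }, with an absolute implied constant. -/

import Mathlib

open Finset Real
open scoped ArithmeticFunction.Moebius

namespace SqPhi

/-- Chebyshev: sum of log p over primes ≤ N is at most N log 4. -/
lemma theta_le (N : ℕ) :
    ∑ p ∈ Nat.primesBelow (N+1), Real.log p ≤ N * Real.log 4 := by
  have h1 : ∑ p ∈ Nat.primesBelow (N+1), Real.log p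
      = Real.log (primorial N) := by
    rw [primorial, Nat.cast_prod, Real.log_prod]
    · rfl
    · intro p hp
      have := (Nat.prime_of_mem_primesBelow hp).pos
      positivity
  rw [h1]
  calc Real.log (primorial N) ≤ Real.log ((4:ℕ) ^ N) := by
        apply Real.log_le_log (by exact_mod_cast primorial_pos N)
        exact_mod_cast primorial_le_4_pow N
    _ = N * Real.log 4 := by
        push_cast
        rw [Real.log_pow]

lemma div_le_factorization_factorial {p N : ℕ} (hp : p.Prime) (hpN : p ≤ N) :
    N / p ≤ (Nat.factorial N).factorization p := by
  haveI : Fact p.Prime := ⟨hp⟩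
  rw [Nat.factorization_def _ hp,
    padicValNat_factorial (n := N) (show Nat.log p N < Nat.log p N + 1 from lt_add_one _)]
  have h1 : 1 ∈ Finset.Ico 1 (Nat.log p N + 1) := by
    simp only [Finset.mem_Ico]
    refine ⟨le_refl _, ?_⟩
    have : 1 ≤ Nat.log p N := Nat.le_log_of_pow_le hp.one_lt (by simpa using hpN)
    omega
  calc N / p = N / p ^ 1 := by rw [pow_one]
    _ ≤ _ := Finset.single_le_sum (f := fun i => N / p ^ i) (fun i _ => Nat.zero_le _) h1

end SqPhi

namespace SqPhi
open Finset Real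

lemma mertens1 {N : ℕ} (hN : 1 ≤ N) :
    ∑ p ∈ Nat.primesBelow (N+1), Real.log p / p ≤ Real.log N + Real.log 4 := by
  have hlogfac : Real.log (Nat.factorial N) ≤ N * Real.log N := by
    calc Real.log (Nat.factorial N) ≤ Real.log ((N:ℕ) ^ N) := by
          apply Real.log_le_log (by exact_mod_cast Nat.factorial_pos N)
          exact_mod_cast Nat.factorial_le_pow N
      _ = N * Real.log N := by push_cast; rw [Real.log_pow]
  -- lower bound on log N!
  have key : ∑ p ∈ Nat.primesBelow (N+1), ((N / p : ℕ) : ℝ) * Real.log p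
      ≤ Real.log (Nat.factorial N) := by
    have hlog : Real.log (Nat.factorial N) =
        ∑ p ∈ (Nat.factorial N).primeFactors, ((Nat.factorial N).factorization p : ℝ) * Real.log p := by
      conv_lhs => rw [← Nat.factorization_prod_pow_eq_self (Nat.factorial_ne_zero N)]
      rw [Nat.prod_factorization_eq_prod_primeFactors, Nat.cast_prod, Real.log_prod]
      · push_cast
        exact Finset.sum_congr rfl fun p hp => by rw [Real.log_pow]
      · intro p hp
        have := (Nat.prime_of_mem_primeFactors hp).pos
        positivity
    rw [hlog]
    have hsub : Nat.primesBelow (N+1) ⊆ (Nat.factorial N).primeFactors := by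
      intro p hp
      have hp' := Nat.prime_of_mem_primesBelow hp
      have hple : p ≤ N := Nat.lt_succ_iff.mp (Nat.lt_of_mem_primesBelow hp)
      exact Nat.mem_primeFactors.mpr ⟨hp', hp'.dvd_factorial.mpr hple, Nat.factorial_ne_zero N⟩
    calc ∑ p ∈ Nat.primesBelow (N+1), ((N / p : ℕ) : ℝ) * Real.log p
        ≤ ∑ p ∈ Nat.primesBelow (N+1), ((Nat.factorial N).factorization p : ℝ) * Real.log p := by
          apply Finset.sum_le_sum
          intro p hp
          have hp' := Nat.prime_of_mem_primesBelow hp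
          have hple : p ≤ N := Nat.lt_succ_iff.mp (Nat.lt_of_mem_primesBelow hp)
          have h1 : ((N / p : ℕ) : ℝ) ≤ ((Nat.factorial N).factorization p : ℝ) := by
            exact_mod_cast div_le_factorization_factorial hp' hple
          apply mul_le_mul_of_nonneg_right h1
          exact Real.log_nonneg (by exact_mod_cast hp'.one_lt.le)
      _ ≤ _ := by
          apply Finset.sum_le_sum_of_subset_of_nonneg hsub
          intro p hp _
          have h1 : (1:ℝ) ≤ p := by exact_mod_cast (Nat.prime_of_mem_primeFactors hp).one_lt.le
          have := Real.log_nonneg h1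
          positivity
  -- now combine
  have hNpos : (0:ℝ) < N := by exact_mod_cast hN
  rw [← mul_le_mul_iff_right₀ hNpos]
  have expand : (N:ℝ) * ∑ p ∈ Nat.primesBelow (N+1), Real.log p / p
      ≤ ∑ p ∈ Nat.primesBelow (N+1), (((N / p : ℕ) : ℝ) + 1) * Real.log p := by
    rw [Finset.mul_sum]
    apply Finset.sum_le_sum
    intro p hp
    have hp' := Nat.prime_of_mem_primesBelow hp
    have hppos : (0:ℝ) < p := by exact_mod_cast hp'.pos
    have hlogp : (0:ℝ) ≤ Real.log p := Real.log_nonneg (by exact_mod_cast hp'.one_lt.le)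
    have hfloor : (N:ℝ) / p ≤ ((N / p : ℕ) : ℝ) + 1 := by
      rw [div_le_iff₀ hppos]
      have hdm := Nat.div_add_mod N p
      have hml := Nat.mod_lt N hp'.pos
      have hnat : N < (N / p + 1) * p := by nlinarith [hdm, hml]
      have : (N:ℝ) < ((N / p : ℕ) + 1 : ℕ) * p := by exact_mod_cast hnat
      push_cast at this
      linarith
    calc (N:ℝ) * (Real.log p / p) = ((N:ℝ)/p) * Real.log p := by ring
      _ ≤ (((N / p : ℕ) : ℝ) + 1) * Real.log p := by
          apply mul_le_mul_of_nonneg_right hfloor hlogp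
  calc (N:ℝ) * ∑ p ∈ Nat.primesBelow (N+1), Real.log p / p
      ≤ ∑ p ∈ Nat.primesBelow (N+1), (((N / p : ℕ) : ℝ) + 1) * Real.log p := expand
    _ = (∑ p ∈ Nat.primesBelow (N+1), ((N / p : ℕ) : ℝ) * Real.log p)
        + ∑ p ∈ Nat.primesBelow (N+1), Real.log p := by
        rw [← Finset.sum_add_distrib]
        exact Finset.sum_congr rfl fun p _ => by ring
    _ ≤ N * Real.log N + N * Real.log 4 := by
        have := theta_le N
        linarith [key, hlogfac]
    _ = N * (Real.log N + Real.log 4) := by ring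


end SqPhi

namespace SqPhi
open Finset Real

lemma telescope_Icc (f : ℕ → ℝ) (k : ℕ) :
    ∑ n ∈ Finset.Icc 2 (k+1), (f n - f (n+1)) = f 2 - f (k+2) := by
  induction k with
  | zero => simp
  | succ k ih =>
    rw [Finset.sum_Icc_succ_top (by omega : 2 ≤ k+1+1), ih]
    ring_nf

lemma abel_identity (c w : ℕ → ℝ) : ∀ k : ℕ,
    ∑ n ∈ Finset.Icc 2 (k+2), c n * w n
      = (∑ n ∈ Finset.Icc 2 (k+2), c n) * w (k+2)
        + ∑ n ∈ Finset.Icc 2 (k+1), (∑ m ∈ Finset.Icc 2 n, c m) * (w n - w (n+1)) := by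
  intro k
  induction k with
  | zero => simp
  | succ k ih =>
    have h1 : ∑ n ∈ Finset.Icc 2 (k+1+2), c n * w n
        = (∑ n ∈ Finset.Icc 2 (k+2), c n * w n) + c (k+3) * w (k+3) := by
      rw [show k+1+2 = (k+2)+1 by ring, Finset.sum_Icc_succ_top (by omega : 2 ≤ k+2+1)]
    have h2 : ∑ n ∈ Finset.Icc 2 (k+1+1), (∑ m ∈ Finset.Icc 2 n, c m) * (w n - w (n+1))
        = (∑ n ∈ Finset.Icc 2 (k+1), (∑ m ∈ Finset.Icc 2 n, c m) * (w n - w (n+1)))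
          + (∑ m ∈ Finset.Icc 2 (k+2), c m) * (w (k+2) - w (k+3)) := by
      rw [show k+1+1 = (k+1)+1 by ring, Finset.sum_Icc_succ_top (by omega : 2 ≤ k+1+1)]
    have h3 : ∑ n ∈ Finset.Icc 2 (k+1+2), c n
        = (∑ n ∈ Finset.Icc 2 (k+2), c n) + c (k+3) := by
      rw [show k+1+2 = (k+2)+1 by ring, Finset.sum_Icc_succ_top (by omega : 2 ≤ k+2+1)]
    rw [h1, h2, h3, ih]
    ring

lemma filter_prime_Icc (y : ℕ) :
    (Finset.Icc 2 y).filter Nat.Prime = Nat.primesBelow (y+1) := by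
  ext p
  simp only [Nat.primesBelow, Finset.mem_filter, Finset.mem_Icc, Finset.mem_range,
    Nat.lt_succ_iff]
  constructor
  · rintro ⟨⟨h2, hy⟩, hp⟩; exact ⟨hy, hp⟩
  · rintro ⟨hy, hp⟩; exact ⟨⟨hp.two_le, hy⟩, hp⟩

lemma mertens2 {y : ℕ} (hy : 2 ≤ y) :
    ∑ p ∈ Nat.primesBelow (y+1), ((p:ℝ))⁻¹ ≤ Real.log (Real.log y) + 6 := by
  obtain ⟨k, rfl⟩ : ∃ k, y = k + 2 := ⟨y - 2, by omega⟩
  set c : ℕ → ℝ := fun n => if n.Prime then Real.log n / n else 0 with hc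
  set w : ℕ → ℝ := fun n => (Real.log n)⁻¹ with hw
  -- the sum of interest equals the Abel sum
  have hsum : ∑ p ∈ Nat.primesBelow (k+2+1), ((p:ℝ))⁻¹
      = ∑ n ∈ Finset.Icc 2 (k+2), c n * w n := by
    rw [← filter_prime_Icc, Finset.sum_filter]
    apply Finset.sum_congr rfl
    intro n hn
    simp only [Finset.mem_Icc] at hn
    by_cases hp : n.Prime
    · have hn2 : (2:ℝ) ≤ n := by exact_mod_cast hp.two_le
      have hlog : Real.log n ≠ 0 := by
        have : (0:ℝ) < Real.log n := Real.log_pos (by linarith)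
        linarith
      simp only [hp, if_true, hc, hw]
      field_simp
    · simp [hp, hc]
  -- partial sums of c are bounded by Mertens 1
  have hA : ∀ n : ℕ, 1 ≤ n → ∑ m ∈ Finset.Icc 2 n, c m ≤ Real.log n + Real.log 4 := by
    intro n hn
    have : ∑ m ∈ Finset.Icc 2 n, c m = ∑ p ∈ Nat.primesBelow (n+1), Real.log p / p := by
      rw [← filter_prime_Icc, Finset.sum_filter]
    rw [this]
    exact mertens1 hn
  have hA0 : ∀ n : ℕ, 0 ≤ ∑ m ∈ Finset.Icc 2 n, c m := by
    intro n
    apply Finset.sum_nonneg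
    intro m hm
    simp only [Finset.mem_Icc] at hm
    by_cases hp : m.Prime
    · simp only [hc, hp, if_true]
      have h1 : (1:ℝ) ≤ m := by exact_mod_cast hp.one_lt.le
      have := Real.log_nonneg h1
      positivity
    · simp [hc, hp]
  rw [hsum, abel_identity c w k]
  have hlog2 : (0:ℝ) < Real.log 2 := Real.log_pos (by norm_num)
  have hlog4 : Real.log 4 = 2 * Real.log 2 := by
    rw [show (4:ℝ) = 2^2 by norm_num, Real.log_pow]; push_cast; ring
  have hlogk2 : Real.log 2 ≤ Real.log (k+2) := by
    apply Real.log_le_log (by norm_num)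
    exact_mod_cast (by omega : (2:ℕ) ≤ k + 2)
  have hlogk2pos : (0:ℝ) < Real.log (k+2) := lt_of_lt_of_le hlog2 hlogk2
  -- first term
  have hcast : ((k+2:ℕ):ℝ) = (k:ℝ)+2 := by push_cast; ring
  have hw0 : ∀ n : ℕ, (0:ℝ) ≤ w n := by
    intro n; simp only [hw]; positivity
  have hAk := hA (k+2) (by omega)
  rw [hcast] at hAk
  have hterm1 : (∑ n ∈ Finset.Icc 2 (k+2), c n) * w (k+2) ≤ 3 := by
    have hwk : w (k+2) = (Real.log ((k:ℝ)+2))⁻¹ := by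
      simp only [hw]; rw [hcast]
    calc (∑ n ∈ Finset.Icc 2 (k+2), c n) * w (k+2)
        ≤ (Real.log ((k:ℝ)+2) + Real.log 4) * w (k+2) :=
          mul_le_mul_of_nonneg_right hAk (hw0 _)
      _ = 1 + Real.log 4 * (Real.log ((k:ℝ)+2))⁻¹ := by
          rw [hwk]; field_simp
      _ ≤ 1 + Real.log 4 * (Real.log 2)⁻¹ := by
          have h1 : (Real.log ((k:ℝ)+2))⁻¹ ≤ (Real.log 2)⁻¹ :=
            inv_anti₀ hlog2 hlogk2
          have h2 : (0:ℝ) ≤ Real.log 4 := by rw [hlog4]; positivity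
          nlinarith
      _ = 3 := by rw [hlog4]; field_simp; ring
  -- second term
  set F : ℕ → ℝ := fun n => Real.log (Real.log n) with hF
  have hterm2 : ∑ n ∈ Finset.Icc 2 (k+1), (∑ m ∈ Finset.Icc 2 n, c m) * (w n - w (n+1))
      ≤ Real.log (Real.log ((k:ℝ)+2)) + 3 := by
    have hstep : ∀ n ∈ Finset.Icc 2 (k+1),
        (∑ m ∈ Finset.Icc 2 n, c m) * (w n - w (n+1))
          ≤ (F (n+1) - F n) + Real.log 4 * (w n - w (n+1)) := by
      intro n hn
      simp only [Finset.mem_Icc] at hn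
      have hn2 : (2:ℝ) ≤ (n:ℝ) := by exact_mod_cast hn.1
      have ha : (0:ℝ) < Real.log n := Real.log_pos (by linarith)
      have hb : (0:ℝ) < Real.log ((n:ℝ)+1) := Real.log_pos (by linarith)
      have hab : Real.log (n:ℝ) ≤ Real.log ((n:ℝ)+1) :=
        Real.log_le_log (by linarith) (by linarith)
      have hwn : w n = (Real.log (n:ℝ))⁻¹ := by simp only [hw]
      have hwn1 : w (n+1) = (Real.log ((n:ℝ)+1))⁻¹ := by
        simp only [hw]; push_cast; ring_nf
      have hwdiff : (0:ℝ) ≤ w n - w (n+1) := by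
        rw [hwn, hwn1, sub_nonneg]
        exact inv_anti₀ ha hab
      have hFn : F n = Real.log (Real.log (n:ℝ)) := by simp only [hF]
      have hFn1 : F (n+1) = Real.log (Real.log ((n:ℝ)+1)) := by
        simp only [hF]; push_cast; ring_nf
      calc (∑ m ∈ Finset.Icc 2 n, c m) * (w n - w (n+1))
          ≤ (Real.log n + Real.log 4) * (w n - w (n+1)) :=
            mul_le_mul_of_nonneg_right (hA n (by omega)) hwdiff
        _ = Real.log n * (w n - w (n+1)) + Real.log 4 * (w n - w (n+1)) := by ring
        _ ≤ (F (n+1) - F n) + Real.log 4 * (w n - w (n+1)) := by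
            apply (add_le_add_iff_right _).mpr
            have hkey : Real.log (n:ℝ) * (w n - w (n+1))
                = 1 - Real.log (n:ℝ) / Real.log ((n:ℝ)+1) := by
              rw [hwn, hwn1]
              field_simp
            rw [hkey, hFn, hFn1]
            have hx : (0:ℝ) < Real.log (n:ℝ) / Real.log ((n:ℝ)+1) := by positivity
            have hlsub := Real.log_le_sub_one_of_pos hx
            rw [Real.log_div ha.ne' hb.ne'] at hlsub
            linarith
    have t1 : ∑ n ∈ Finset.Icc 2 (k+1), (F (n+1) - F n) = F (k+2) - F 2 := by
      have h := telescope_Icc F k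
      have h2 : ∑ n ∈ Finset.Icc 2 (k+1), (F (n+1) - F n)
          = -∑ n ∈ Finset.Icc 2 (k+1), (F n - F (n+1)) := by
        rw [← Finset.sum_neg_distrib]
        exact Finset.sum_congr rfl fun _ _ => by ring
      rw [h2, h]; ring
    have t2 : ∑ n ∈ Finset.Icc 2 (k+1), (w n - w (n+1)) = w 2 - w (k+2) := telescope_Icc w k
    calc ∑ n ∈ Finset.Icc 2 (k+1), (∑ m ∈ Finset.Icc 2 n, c m) * (w n - w (n+1))
        ≤ ∑ n ∈ Finset.Icc 2 (k+1), ((F (n+1) - F n) + Real.log 4 * (w n - w (n+1))) :=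
          Finset.sum_le_sum hstep
      _ = (F (k+2) - F 2) + Real.log 4 * (w 2 - w (k+2)) := by
          rw [Finset.sum_add_distrib, t1, ← Finset.mul_sum, t2]
      _ ≤ Real.log (Real.log ((k:ℝ)+2)) + 3 := by
          have hF2 : F 2 = Real.log (Real.log 2) := by simp only [hF]; norm_num
          have hFk2 : F (k+2) = Real.log (Real.log ((k:ℝ)+2)) := by
            simp only [hF]; rw [hcast]
          have h1 : -Real.log (Real.log 2) ≤ 1 := by
            have he : Real.exp (-1) ≤ Real.log 2 := by
              rw [Real.exp_neg]
              have h2 : (2:ℝ) ≤ Real.exp 1 := by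
                have := Real.add_one_le_exp (1:ℝ)
                linarith
              have h3 : (Real.exp 1)⁻¹ ≤ (2:ℝ)⁻¹ := inv_anti₀ (by norm_num) h2
              have hl2 : (0.6931471803:ℝ) < Real.log 2 := Real.log_two_gt_d9
              linarith
            have hmono := Real.log_le_log (Real.exp_pos _) he
            rw [Real.log_exp] at hmono
            linarith
          have h2 : Real.log 4 * (w 2 - w (k+2)) ≤ 2 := by
            have hw2 : w 2 = (Real.log 2)⁻¹ := by simp only [hw]; norm_num
            calc Real.log 4 * (w 2 - w (k+2)) ≤ Real.log 4 * w 2 := by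
                  apply mul_le_mul_of_nonneg_left _ (by rw [hlog4]; positivity)
                  have := hw0 (k+2)
                  linarith
              _ = 2 := by rw [hw2, hlog4]; field_simp
          rw [hF2, hFk2]
          linarith
  have hcast2 : Real.log ((k + 2 : ℕ):ℝ) = Real.log ((k:ℝ)+2) := by rw [hcast]
  rw [hcast2]
  linarith
end SqPhi

namespace SqPhi
open Finset Real

lemma telescope_inv_le {y : ℕ} (hy : 1 ≤ y) :
    ∑ n ∈ Finset.Icc 2 y, (((n:ℝ) - 1)⁻¹ - ((n:ℝ))⁻¹) ≤ 1 := by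
  obtain ⟨k, rfl⟩ : ∃ k, y = k + 1 := ⟨y - 1, by omega⟩
  set f : ℕ → ℝ := fun n => ((n:ℝ) - 1)⁻¹ with hf
  have : ∑ n ∈ Finset.Icc 2 (k+1), (((n:ℝ) - 1)⁻¹ - ((n:ℝ))⁻¹)
      = ∑ n ∈ Finset.Icc 2 (k+1), (f n - f (n+1)) := by
    apply Finset.sum_congr rfl
    intro n hn
    simp only [hf]
    push_cast
    ring_nf
  rw [this, telescope_Icc f k]
  simp only [hf]
  push_cast
  have hk0 : (0:ℝ) ≤ (k:ℝ) := Nat.cast_nonneg k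
  have h1 : (0:ℝ) ≤ ((k:ℝ) + 2 - 1)⁻¹ := inv_nonneg.mpr (by linarith)
  norm_num
  linarith

lemma sum_primes_inv_sub_one_sub_inv_le {y : ℕ} (hy : 1 ≤ y) :
    ∑ p ∈ Nat.primesBelow (y+1), (((p:ℝ) - 1)⁻¹ - ((p:ℝ))⁻¹) ≤ 1 := by
  refine le_trans ?_ (telescope_inv_le hy)
  rw [← filter_prime_Icc]
  apply Finset.sum_le_sum_of_subset_of_nonneg (Finset.filter_subset _ _)
  intro n hn _
  simp only [Finset.mem_Icc] at hn
  have hn2 : (2:ℝ) ≤ (n:ℝ) := by exact_mod_cast hn.1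
  rw [sub_nonneg]
  apply inv_anti₀ (by linarith)
  linarith

lemma mertens2' {y : ℕ} (hy : 2 ≤ y) :
    ∑ p ∈ Nat.primesBelow (y+1), ((p:ℝ) - 1)⁻¹ ≤ Real.log (Real.log y) + 7 := by
  have h1 : ∑ p ∈ Nat.primesBelow (y+1), ((p:ℝ) - 1)⁻¹
      = (∑ p ∈ Nat.primesBelow (y+1), ((p:ℝ))⁻¹)
        + ∑ p ∈ Nat.primesBelow (y+1), (((p:ℝ) - 1)⁻¹ - ((p:ℝ))⁻¹) := by
    rw [← Finset.sum_add_distrib]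
    exact Finset.sum_congr rfl fun p _ => by ring
  rw [h1]
  have := mertens2 hy
  have := sum_primes_inv_sub_one_sub_inv_le (by omega : 1 ≤ y)
  linarith

lemma mertens3 {N : ℕ} (hN : 1 ≤ N) {x : ℝ} (hNx : (N:ℝ) ≤ x) (hx3 : 3 ≤ x) :
    ∏ p ∈ Nat.primesBelow (N+1), ((p:ℝ)/((p:ℝ)-1)) ≤ Real.exp 7 * Real.log x := by
  have hlogx : 1 ≤ Real.log x := by
    have h3 : Real.log 3 ≤ Real.log x := Real.log_le_log (by norm_num) hx3
    have : (1:ℝ) ≤ Real.log 3 := by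
      have he : Real.exp 1 ≤ 3 := by
        have := Real.exp_one_lt_d9
        linarith
      have := Real.log_le_log (Real.exp_pos 1) he
      rwa [Real.log_exp] at this
    linarith
  rcases Nat.lt_or_ge N 2 with hN2 | hN2
  · interval_cases N
    · have h2 : Nat.primesBelow 2 = ∅ := by decide
      rw [h2]
      simp only [Finset.prod_empty]
      calc (1:ℝ) ≤ Real.exp 7 * 1 := by
            have := Real.one_le_exp (by norm_num : (0:ℝ) ≤ 7)
            linarith
        _ ≤ Real.exp 7 * Real.log x := by
            have := Real.exp_pos (7:ℝ)
            nlinarith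
  · -- N ≥ 2
    have hprod : ∏ p ∈ Nat.primesBelow (N+1), ((p:ℝ)/((p:ℝ)-1))
        ≤ Real.exp (∑ p ∈ Nat.primesBelow (N+1), ((p:ℝ) - 1)⁻¹) := by
      rw [Real.exp_sum]
      apply Finset.prod_le_prod
      · intro p hp
        have h2 : (2:ℝ) ≤ p := by exact_mod_cast (Nat.prime_of_mem_primesBelow hp).two_le
        have h1 : (0:ℝ) < (p:ℝ) - 1 := by linarith
        positivity
      · intro p hp
        have h2 : (2:ℝ) ≤ p := by exact_mod_cast (Nat.prime_of_mem_primesBelow hp).two_le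
        have h1 : (0:ℝ) < (p:ℝ) - 1 := by linarith
        have key : (p:ℝ)/((p:ℝ)-1) = 1 + ((p:ℝ)-1)⁻¹ := by field_simp; ring
        rw [key]
        have := Real.add_one_le_exp (((p:ℝ)-1)⁻¹)
        linarith
    have hlogN : (0:ℝ) < Real.log N := by
      apply Real.log_pos
      exact_mod_cast hN2
    calc ∏ p ∈ Nat.primesBelow (N+1), ((p:ℝ)/((p:ℝ)-1))
        ≤ Real.exp (∑ p ∈ Nat.primesBelow (N+1), ((p:ℝ) - 1)⁻¹) := hprod
      _ ≤ Real.exp (Real.log (Real.log N) + 7) := Real.exp_le_exp.mpr (mertens2' hN2)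
      _ = Real.exp 7 * Real.log N := by
          rw [Real.exp_add, Real.exp_log hlogN]
          ring
      _ ≤ Real.exp 7 * Real.log x := by
          have hmono : Real.log (N:ℝ) ≤ Real.log x := by
            have h0 : (0:ℝ) < (N:ℝ) := by exact_mod_cast (by omega : 0 < N)
            exact Real.log_le_log h0 hNx
          have := Real.exp_pos (7:ℝ)
          nlinarith

end SqPhi

namespace SqPhi
open Finset Real

lemma totient_eq_prod {n : ℕ} (hn : Squarefree n) :
    Nat.totient n = ∏ p ∈ n.primeFactors, (p - 1) := by
  have h0 : 0 < n := hn.ne_zero.bot_lt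
  have h1 := Nat.totient_mul_prod_primeFactors n
  rw [Nat.prod_primeFactors_of_squarefree hn] at h1
  have h2 : n * Nat.totient n = n * ∏ p ∈ n.primeFactors, (p - 1) := by
    rw [← h1]; ring
  exact Nat.eq_of_mul_eq_mul_left h0 h2

lemma totient_ratio {n : ℕ} (hn : Squarefree n) :
    (n:ℝ) / (Nat.totient n : ℝ) = ∏ p ∈ n.primeFactors, ((p:ℝ)/((p:ℝ)-1)) := by
  have hnum : (n:ℝ) = ∏ p ∈ n.primeFactors, (p:ℝ) := by
    rw [← Nat.cast_prod, Nat.prod_primeFactors_of_squarefree hn]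
  have hden : (Nat.totient n : ℝ) = ∏ p ∈ n.primeFactors, ((p:ℝ) - 1) := by
    rw [totient_eq_prod hn]
    push_cast [Nat.cast_prod]
    apply Finset.prod_congr rfl
    intro p hp
    have := (Nat.prime_of_mem_primeFactors hp).one_lt
    rw [Nat.cast_sub (by omega)]
    norm_num
  rw [hnum, hden, ← Finset.prod_div_distrib]

lemma prod_ratio_primeFactors_le {n : ℕ} (hn : Squarefree n) :
    ∏ p ∈ n.primeFactors, ((p:ℝ)/((p:ℝ)-1))
      ≤ Real.exp 8 * Real.log ((n.primeFactors.card : ℝ) + 2) := by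
  set k := n.primeFactors.card with hk
  set T := k + 2 with hT
  -- sum bound
  have hsum : ∑ p ∈ n.primeFactors, ((p:ℝ) - 1)⁻¹
      ≤ Real.log (Real.log ((T:ℕ):ℝ)) + 8 := by
    have hsplit := Finset.filter_union_filter_not_eq (fun p => p ≤ T) n.primeFactors
    have hdisj : Disjoint (n.primeFactors.filter (fun p => p ≤ T))
        (n.primeFactors.filter (fun p => ¬ p ≤ T)) :=
      Finset.disjoint_filter_filter_not _ _ _
    rw [← hsplit, Finset.sum_union hdisj]
    have hsmall : ∑ p ∈ n.primeFactors.filter (fun p => p ≤ T), ((p:ℝ) - 1)⁻¹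
        ≤ Real.log (Real.log ((T:ℕ):ℝ)) + 7 := by
      refine le_trans ?_ (mertens2' (by omega : 2 ≤ T))
      apply Finset.sum_le_sum_of_subset_of_nonneg
      · intro p hp
        simp only [Finset.mem_filter] at hp
        have hpp := Nat.prime_of_mem_primeFactors hp.1
        exact Nat.mem_primesBelow.mpr ⟨by omega, hpp⟩
      · intro p hp _
        have h2 : (2:ℝ) ≤ p := by exact_mod_cast (Nat.prime_of_mem_primesBelow hp).two_le
        exact inv_nonneg.mpr (by linarith)
    have hlarge : ∑ p ∈ n.primeFactors.filter (fun p => ¬ p ≤ T), ((p:ℝ) - 1)⁻¹ ≤ 1 := by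
      have hcard : (n.primeFactors.filter (fun p => ¬ p ≤ T)).card ≤ k :=
        le_trans (Finset.card_filter_le _ _) (le_of_eq hk.symm)
      have hbound : ∀ p ∈ n.primeFactors.filter (fun p => ¬ p ≤ T),
          ((p:ℝ) - 1)⁻¹ ≤ ((k:ℝ) + 1)⁻¹ := by
        intro p hp
        simp only [Finset.mem_filter, not_le] at hp
        have : (T:ℝ) < (p:ℝ) := by exact_mod_cast hp.2
        apply inv_anti₀
        · positivity
        · simp only [hT] at this
          push_cast at this
          linarith
      calc ∑ p ∈ n.primeFactors.filter (fun p => ¬ p ≤ T), ((p:ℝ) - 1)⁻¹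
          ≤ ∑ _p ∈ n.primeFactors.filter (fun p => ¬ p ≤ T), ((k:ℝ) + 1)⁻¹ :=
            Finset.sum_le_sum hbound
        _ = (n.primeFactors.filter (fun p => ¬ p ≤ T)).card * ((k:ℝ) + 1)⁻¹ := by
            rw [Finset.sum_const, nsmul_eq_mul]
        _ ≤ (k:ℝ) * ((k:ℝ) + 1)⁻¹ := by
            have h1 : (0:ℝ) ≤ ((k:ℝ) + 1)⁻¹ := by positivity
            have h2 : ((n.primeFactors.filter (fun p => ¬ p ≤ T)).card : ℝ) ≤ (k:ℝ) := by
              exact_mod_cast hcard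
            nlinarith
        _ ≤ 1 := by
            rw [mul_inv_le_iff₀ (by positivity)]
            linarith
    linarith
  -- conclude via exp
  have hexp : ∏ p ∈ n.primeFactors, ((p:ℝ)/((p:ℝ)-1))
      ≤ Real.exp (∑ p ∈ n.primeFactors, ((p:ℝ) - 1)⁻¹) := by
    rw [Real.exp_sum]
    apply Finset.prod_le_prod
    · intro p hp
      have h2 : (2:ℝ) ≤ p := by exact_mod_cast (Nat.prime_of_mem_primeFactors hp).two_le
      have h1 : (0:ℝ) < (p:ℝ) - 1 := by linarith
      positivity
    · intro p hp
      have h2 : (2:ℝ) ≤ p := by exact_mod_cast (Nat.prime_of_mem_primeFactors hp).two_le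
      have h1 : (0:ℝ) < (p:ℝ) - 1 := by linarith
      have key : (p:ℝ)/((p:ℝ)-1) = 1 + ((p:ℝ)-1)⁻¹ := by field_simp; ring
      rw [key]
      have := Real.add_one_le_exp (((p:ℝ)-1)⁻¹)
      linarith
  have hlogT : (0:ℝ) < Real.log ((T:ℕ):ℝ) := by
    apply Real.log_pos
    exact_mod_cast (by omega : 1 < T)
  calc ∏ p ∈ n.primeFactors, ((p:ℝ)/((p:ℝ)-1))
      ≤ Real.exp (∑ p ∈ n.primeFactors, ((p:ℝ) - 1)⁻¹) := hexp
    _ ≤ Real.exp (Real.log (Real.log ((T:ℕ):ℝ)) + 8) := Real.exp_le_exp.mpr hsum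
    _ = Real.exp 8 * Real.log ((T:ℕ):ℝ) := by
        rw [Real.exp_add, Real.exp_log hlogT]; ring
    _ = Real.exp 8 * Real.log ((k:ℝ) + 2) := by
        have : ((T:ℕ):ℝ) = (k:ℝ) + 2 := by rw [hT]; push_cast; ring
        rw [this]

lemma two_pow_card_le {n : ℕ} (hn : Squarefree n) :
    2 ^ n.primeFactors.card ≤ n := by
  calc 2 ^ n.primeFactors.card = ∏ _p ∈ n.primeFactors, 2 :=
        (Finset.prod_const 2).symm
    _ ≤ ∏ p ∈ n.primeFactors, p := by
        apply Finset.prod_le_prod'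
        intro p hp
        exact (Nat.prime_of_mem_primeFactors hp).two_le
    _ = n := Nat.prod_primeFactors_of_squarefree hn

end SqPhi

namespace SqPhi
open Finset Real

lemma count_AP_nat {N r M d : ℕ} (hM : 0 < M) (hd : 0 < d) (hco : Nat.Coprime d M) :
    ((Finset.Icc 1 N).filter (fun n => n % M = r % M ∧ d ∣ n)).card ≤ N / (d * M) + 1 := by
  classical
  set s := (Finset.Icc 1 N).filter (fun n => n % M = r % M ∧ d ∣ n) with hs
  have hdM : 0 < d * M := Nat.mul_pos hd hM
  have key : ∀ n₁ ∈ s, ∀ n₂ ∈ s, n₁ ≤ n₂ → n₁ / (d*M) = n₂ / (d*M) → n₁ = n₂ := by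
    intro n₁ h₁ n₂ h₂ hle hq
    simp only [hs, Finset.mem_filter, Finset.mem_Icc] at h₁ h₂
    have hmod : M ∣ n₂ - n₁ := by
      have : n₁ ≡ n₂ [MOD M] := by
        unfold Nat.ModEq
        rw [h₁.2.1, h₂.2.1]
      exact (Nat.modEq_iff_dvd' hle).mp this
    have hdvd : d ∣ n₂ - n₁ := Nat.dvd_sub h₂.2.2 h₁.2.2
    have hdM2 : d * M ∣ n₂ - n₁ := Nat.Coprime.mul_dvd_of_dvd_of_dvd hco hdvd hmod
    have hlt : n₂ - n₁ < d * M := by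
      have e₁ := Nat.div_add_mod n₁ (d*M)
      have e₂ := Nat.div_add_mod n₂ (d*M)
      rw [hq] at e₁
      have m₁ := Nat.mod_lt n₁ hdM
      have m₂ := Nat.mod_lt n₂ hdM
      omega
    have := Nat.eq_zero_of_dvd_of_lt hdM2 hlt |>.symm
    omega
  have hinj : Set.InjOn (fun n => n / (d*M)) s := by
    intro n₁ h₁ n₂ h₂ hq
    simp only at hq
    rcases le_total n₁ n₂ with h | h
    · exact key n₁ h₁ n₂ h₂ h hq
    · exact (key n₂ h₂ n₁ h₁ h hq.symm).symm
  have hmaps : ∀ n ∈ s, n / (d*M) ∈ Finset.range (N / (d*M) + 1) := by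
    intro n hn
    simp only [hs, Finset.mem_filter, Finset.mem_Icc] at hn
    simp only [Finset.mem_range]
    have := Nat.div_le_div_right (c := d*M) hn.1.2
    omega
  calc s.card ≤ (Finset.range (N / (d*M) + 1)).card :=
        Finset.card_le_card_of_injOn _ hmaps hinj
    _ = N / (d*M) + 1 := Finset.card_range _

lemma count_AP_real {N r M d : ℕ} (hM : 0 < M) (hd : 0 < d) (hco : Nat.Coprime d M)
    {X : ℝ} (hX : (N:ℝ) ≤ X) :
    (((Finset.Icc 1 N).filter (fun n => n % M = r % M ∧ d ∣ n)).card : ℝ)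
      ≤ X / ((d:ℝ) * M) + 1 := by
  have h1 := count_AP_nat (N := N) (r := r) hM hd hco
  have h2 : (((Finset.Icc 1 N).filter (fun n => n % M = r % M ∧ d ∣ n)).card : ℝ)
      ≤ ((N / (d*M) : ℕ) : ℝ) + 1 := by exact_mod_cast h1
  have h3 : ((N / (d*M) : ℕ) : ℝ) ≤ (N:ℝ) / ((d:ℝ) * M) := by
    rw [← Nat.cast_mul]
    exact Nat.cast_div_le
  have h4 : (N:ℝ) / ((d:ℝ) * M) ≤ X / ((d:ℝ) * M) := by
    have hc : (0:ℝ) < (d:ℝ)*M := by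
      have : (0:ℝ) < (d:ℝ) := by exact_mod_cast hd
      have : (0:ℝ) < (M:ℝ) := by exact_mod_cast hM
      positivity
    gcongr
  linarith

end SqPhi

namespace SqPhi
open Finset Real

noncomputable def gP (p : ℕ) : ℝ := ((p:ℝ)/((p:ℝ)-1))^2 - 1

lemma gP_nonneg {p : ℕ} (hp : p.Prime) : 0 ≤ gP p := by
  have h2 : (2:ℝ) ≤ p := by exact_mod_cast hp.two_le
  have h1 : (0:ℝ) < (p:ℝ) - 1 := by linarith
  have hr : (1:ℝ) ≤ (p:ℝ)/((p:ℝ)-1) := by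
    rw [le_div_iff₀ h1]; linarith
  simp only [gP]
  nlinarith

lemma one_add_gP {p : ℕ} (hp : p.Prime) :
    1 + gP p = ((p:ℝ)/((p:ℝ)-1))^2 := by simp [gP]

/-- Expanding a product of (1 + g p) over prime factors of a squarefree number as a sum
over squarefree divisors lying in `Icc 1 N`. -/
lemma prod_one_add_eq_sum_divisors {n N : ℕ} (hn : Squarefree n) (h1 : 1 ≤ n) (hN : n ≤ N)
    (g : ℕ → ℝ) :
    ∏ p ∈ n.primeFactors, (1 + g p)
      = ∑ D ∈ Finset.Icc 1 N, (if Squarefree D ∧ D ∣ n then ∏ p ∈ D.primeFactors, g p else 0) := by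
  classical
  have hexp : ∏ p ∈ n.primeFactors, (1 + g p)
      = ∑ t ∈ n.primeFactors.powerset, ∏ p ∈ t, g p := by
    have hcomm : ∏ p ∈ n.primeFactors, (1 + g p) = ∏ p ∈ n.primeFactors, (g p + 1) :=
      Finset.prod_congr rfl fun p _ => by ring
    rw [hcomm, Finset.prod_add g (fun _ => (1:ℝ)) n.primeFactors]
    exact Finset.sum_congr rfl fun t ht => by rw [Finset.prod_const_one, mul_one]
  rw [hexp, ← Finset.sum_filter]
  apply Finset.sum_nbij' (i := fun t => ∏ p ∈ t, p) (j := fun D => D.primeFactors)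
  · intro t ht
    simp only [Finset.mem_powerset] at ht
    have hprime : ∀ p ∈ t, p.Prime := fun p hp => Nat.prime_of_mem_primeFactors (ht hp)
    have hdvd : (∏ p ∈ t, p) ∣ n := by
      have := Finset.prod_dvd_prod_of_subset t n.primeFactors id ht
      simpa [Nat.prod_primeFactors_of_squarefree hn] using this
    have hpos : 0 < ∏ p ∈ t, p := Finset.prod_pos fun p hp => (hprime p hp).pos
    simp only [Finset.mem_filter, Finset.mem_Icc]
    refine ⟨⟨hpos, le_trans (Nat.le_of_dvd (by omega) hdvd) hN⟩, hn.squarefree_of_dvd hdvd, hdvd⟩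
  · intro D hD
    simp only [Finset.mem_filter, Finset.mem_Icc] at hD
    simp only [Finset.mem_powerset]
    exact Nat.primeFactors_mono hD.2.2 hn.ne_zero
  · intro t ht
    simp only [Finset.mem_powerset] at ht
    exact Nat.primeFactors_prod (fun p hp => Nat.prime_of_mem_primeFactors (ht hp))
  · intro D hD
    simp only [Finset.mem_filter, Finset.mem_Icc] at hD
    exact Nat.prod_primeFactors_of_squarefree hD.2.1
  · intro t ht
    simp only [Finset.mem_powerset] at ht
    rw [Nat.primeFactors_prod (fun p hp => Nat.prime_of_mem_primeFactors (ht hp))]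

/-- Sum over squarefree numbers up to N of a multiplicative-type product is at most the
product over all primes up to N. -/
lemma sum_squarefree_le_prod (N : ℕ) (g : ℕ → ℝ) (hg : ∀ p, p.Prime → 0 ≤ g p) :
    ∑ D ∈ (Finset.Icc 1 N).filter Squarefree, ∏ p ∈ D.primeFactors, g p
      ≤ ∏ p ∈ Nat.primesBelow (N+1), (1 + g p) := by
  classical
  have hexp : ∏ p ∈ Nat.primesBelow (N+1), (1 + g p)
      = ∑ t ∈ (Nat.primesBelow (N+1)).powerset, ∏ p ∈ t, g p := by
    have hcomm : ∏ p ∈ Nat.primesBelow (N+1), (1 + g p)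
        = ∏ p ∈ Nat.primesBelow (N+1), (g p + 1) :=
      Finset.prod_congr rfl fun p _ => by ring
    rw [hcomm, Finset.prod_add g (fun _ => (1:ℝ)) (Nat.primesBelow (N+1))]
    exact Finset.sum_congr rfl fun t ht => by rw [Finset.prod_const_one, mul_one]
  rw [hexp]
  have hinj : Set.InjOn Nat.primeFactors ((Finset.Icc 1 N).filter Squarefree) := by
    intro D₁ h₁ D₂ h₂ heq
    simp only [Finset.coe_filter, Set.mem_setOf_eq, Finset.mem_Icc] at h₁ h₂
    have e₁ := Nat.prod_primeFactors_of_squarefree h₁.2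
    have e₂ := Nat.prod_primeFactors_of_squarefree h₂.2
    rw [← e₁, ← e₂, heq]
  have himage : ((Finset.Icc 1 N).filter Squarefree).image Nat.primeFactors
      ⊆ (Nat.primesBelow (N+1)).powerset := by
    intro t ht
    simp only [Finset.mem_image] at ht
    obtain ⟨D, hD, rfl⟩ := ht
    simp only [Finset.mem_filter, Finset.mem_Icc] at hD
    simp only [Finset.mem_powerset]
    intro p hp
    have hpp := Nat.prime_of_mem_primeFactors hp
    have hdvd := Nat.dvd_of_mem_primeFactors hp
    have : p ≤ D := Nat.le_of_dvd (by omega) hdvd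
    exact Nat.mem_primesBelow.mpr ⟨by omega, hpp⟩
  calc ∑ D ∈ (Finset.Icc 1 N).filter Squarefree, ∏ p ∈ D.primeFactors, g p
      = ∑ t ∈ ((Finset.Icc 1 N).filter Squarefree).image Nat.primeFactors, ∏ p ∈ t, g p := by
        rw [Finset.sum_image (fun D₁ h₁ D₂ h₂ => hinj h₁ h₂)]
    _ ≤ ∑ t ∈ (Nat.primesBelow (N+1)).powerset, ∏ p ∈ t, g p := by
        apply Finset.sum_le_sum_of_subset_of_nonneg himage
        intro t ht _
        apply Finset.prod_nonneg
        intro p hp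
        simp only [Finset.mem_powerset] at ht
        exact hg p (Nat.prime_of_mem_primesBelow (ht hp))

end SqPhi

namespace SqPhi
open Finset Real ArithmeticFunction

lemma one_le_log {x : ℝ} (hx : 3 ≤ x) : 1 ≤ Real.log x := by
  have he : Real.exp 1 ≤ 3 := by
    have := Real.exp_one_lt_d9
    linarith
  have := Real.log_le_log (Real.exp_pos 1) (le_trans he hx)
  rwa [Real.log_exp] at this

lemma log_three_lb : (1.02:ℝ) ≤ Real.log 3 := by
  have h3 : (3:ℝ) = 2 * 1.5 := by norm_num
  have hl2 : (0.6931471803:ℝ) < Real.log 2 := Real.log_two_gt_d9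
  have hl15 : (1:ℝ)/3 ≤ Real.log 1.5 := by
    have hpos : (0:ℝ) < (2:ℝ)/3 := by norm_num
    have := Real.log_le_sub_one_of_pos hpos
    have hlog : Real.log ((2:ℝ)/3) = - Real.log (3/2) := by
      rw [← Real.log_inv]
      norm_num
    rw [hlog] at this
    have : (1:ℝ)/3 ≤ Real.log (3/2) := by linarith
    norm_num at this ⊢
    linarith
  rw [h3, Real.log_mul (by norm_num) (by norm_num)]
  linarith

lemma loglog_lb {x : ℝ} (hx : 3 ≤ x) : (0.019:ℝ) ≤ Real.log (Real.log x) := by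
  have h1 : (1.02:ℝ) ≤ Real.log x := by
    have := Real.log_le_log (by norm_num : (0:ℝ) < 3) hx
    have := log_three_lb
    linarith
  have h2 : Real.log 1.02 ≤ Real.log (Real.log x) :=
    Real.log_le_log (by norm_num) h1
  have h3 : (0.019:ℝ) ≤ Real.log 1.02 := by
    have hpos : (0:ℝ) < (1:ℝ)/1.02 := by norm_num
    have := Real.log_le_sub_one_of_pos hpos
    have hlog : Real.log ((1:ℝ)/1.02) = - Real.log 1.02 := by
      rw [← Real.log_inv]
      norm_num
    rw [hlog] at this
    norm_num at this ⊢
    linarith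
  linarith

/-- The summand equals the product over prime factors (or 0). -/
lemma term_eq {n : ℕ} (hn : 0 < n) :
    ((μ n : ℝ) ^ 2 * (n : ℝ) ^ 2 / (Nat.totient n : ℝ) ^ 2)
      = if Squarefree n then ∏ p ∈ n.primeFactors, (1 + gP p) else 0 := by
  by_cases hsq : Squarefree n
  · rw [if_pos hsq]
    have hmu : (μ n : ℤ) ^ 2 = 1 := moebius_sq_eq_one_of_squarefree hsq
    have hmu' : ((μ n : ℤ) : ℝ) ^ 2 = 1 := by exact_mod_cast hmu
    have hphi : (0:ℝ) < (Nat.totient n : ℝ) := by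
      exact_mod_cast Nat.totient_pos.mpr hn
    have hratio := totient_ratio hsq
    calc ((μ n : ℝ) ^ 2 * (n : ℝ) ^ 2 / (Nat.totient n : ℝ) ^ 2)
        = ((n : ℝ) / (Nat.totient n : ℝ)) ^ 2 := by
          rw [hmu']
          field_simp
      _ = (∏ p ∈ n.primeFactors, ((p:ℝ)/((p:ℝ)-1))) ^ 2 := by rw [hratio]
      _ = ∏ p ∈ n.primeFactors, ((p:ℝ)/((p:ℝ)-1)) ^ 2 := by
          rw [Finset.prod_pow]
      _ = ∏ p ∈ n.primeFactors, (1 + gP p) :=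
          Finset.prod_congr rfl fun p hp =>
            (one_add_gP (Nat.prime_of_mem_primeFactors hp)).symm
  · rw [if_neg hsq, moebius_eq_zero_of_not_squarefree hsq]
    norm_num

end SqPhi

namespace SqPhi
open Finset Real ArithmeticFunction

lemma bound2 (a q m : ℕ) (hq : 0 < q) {X : ℝ} (hX : 1 ≤ X) :
    (∑ n ∈ (Finset.Icc 1 ⌊X⌋₊).filter (fun n => n % q = a % q ∧ Nat.Coprime n m),
      ((μ n : ℝ) ^ 2 * (n : ℝ) ^ 2 / (Nat.totient n : ℝ) ^ 2))
    ≤ (10000 * Real.exp 16) * ((X / q + 1) * (Real.log (Real.log (3 * X))) ^ 2) := by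
  classical
  set N := ⌊X⌋₊ with hN
  set F := (Finset.Icc 1 N).filter (fun n => n % q = a % q ∧ Nat.Coprime n m) with hF
  have h3X : (3:ℝ) ≤ 3 * X := by linarith
  have hlog1 : 1 ≤ Real.log (3*X) := one_le_log h3X
  set LL := Real.log (Real.log (3*X)) with hLL
  have hll : (0.019:ℝ) ≤ LL := loglog_lb h3X
  have hNX : (N:ℝ) ≤ X := Nat.floor_le (by linarith)
  -- pointwise bound
  have hterm : ∀ n ∈ F, ((μ n : ℝ) ^ 2 * (n : ℝ) ^ 2 / (Nat.totient n : ℝ) ^ 2)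
      ≤ 10000 * Real.exp 16 * LL ^ 2 := by
    intro n hn
    simp only [hF, Finset.mem_filter, Finset.mem_Icc] at hn
    have hn1 : 1 ≤ n := hn.1.1
    have hterm0 : (0:ℝ) ≤ 10000 * Real.exp 16 * LL ^ 2 := by positivity
    rw [term_eq (by omega)]
    by_cases hsq : Squarefree n
    · rw [if_pos hsq]
      set k := n.primeFactors.card with hk
      -- bound on k
      have h2k : (2:ℝ) ^ k ≤ (n:ℝ) := by exact_mod_cast two_pow_card_le hsq
      have hnX : (n:ℝ) ≤ 3 * X := by
        have : (n:ℝ) ≤ (N:ℝ) := by exact_mod_cast hn.1.2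
        linarith
    -- k log 2 ≤ log (3X)
      have hklog : (k:ℝ) * Real.log 2 ≤ Real.log (3*X) := by
        have h1 : Real.log ((2:ℝ)^k) ≤ Real.log (3*X) := by
          apply Real.log_le_log (by positivity)
          linarith
        rwa [Real.log_pow] at h1
      have hlog2 : (0.6931471803:ℝ) < Real.log 2 := Real.log_two_gt_d9
      have hkb : (k:ℝ) ≤ 2 * Real.log (3*X) := by
        have hk0 : (0:ℝ) ≤ (k:ℝ) := Nat.cast_nonneg k
        nlinarith
      -- log (k+2) ≤ 100 LL
      have hlogk : Real.log ((k:ℝ) + 2) ≤ 100 * LL := by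
        have h1 : (k:ℝ) + 2 ≤ 4 * Real.log (3*X) := by linarith
        have h2 : Real.log ((k:ℝ) + 2) ≤ Real.log (4 * Real.log (3*X)) := by
          apply Real.log_le_log (by positivity) h1
        have h3 : Real.log (4 * Real.log (3*X)) = Real.log 4 + LL := by
          rw [Real.log_mul (by norm_num) (by linarith)]
        have hlog2' : Real.log 2 < 0.6931471808 := Real.log_two_lt_d9
        have h4 : Real.log 4 = 2 * Real.log 2 := by
          rw [show (4:ℝ) = 2^2 by norm_num, Real.log_pow]; push_cast; ring
        have h5 : Real.log 4 ≤ 99 * LL := by nlinarith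
        linarith
      -- assemble
      have hprod := prod_ratio_primeFactors_le hsq
      rw [← hk] at hprod
      have hprodpos : (0:ℝ) ≤ ∏ p ∈ n.primeFactors, ((p:ℝ)/((p:ℝ)-1)) := by
        apply Finset.prod_nonneg
        intro p hp
        have h2 : (2:ℝ) ≤ p := by exact_mod_cast (Nat.prime_of_mem_primeFactors hp).two_le
        have : (0:ℝ) < (p:ℝ) - 1 := by linarith
        positivity
      have heq : ∏ p ∈ n.primeFactors, (1 + gP p)
          = (∏ p ∈ n.primeFactors, ((p:ℝ)/((p:ℝ)-1))) ^ 2 := by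
        rw [← Finset.prod_pow]
        exact Finset.prod_congr rfl fun p hp =>
          one_add_gP (Nat.prime_of_mem_primeFactors hp)
      rw [heq]
      have hub : ∏ p ∈ n.primeFactors, ((p:ℝ)/((p:ℝ)-1)) ≤ Real.exp 8 * (100 * LL) := by
        calc ∏ p ∈ n.primeFactors, ((p:ℝ)/((p:ℝ)-1))
            ≤ Real.exp 8 * Real.log ((k:ℝ) + 2) := hprod
          _ ≤ Real.exp 8 * (100 * LL) := by
              have := Real.exp_pos (8:ℝ)
              nlinarith
      calc (∏ p ∈ n.primeFactors, ((p:ℝ)/((p:ℝ)-1))) ^ 2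
          ≤ (Real.exp 8 * (100 * LL)) ^ 2 := by
            apply pow_le_pow_left₀ hprodpos hub
        _ = 10000 * (Real.exp 8)^2 * LL ^ 2 := by ring
        _ = 10000 * Real.exp 16 * LL ^ 2 := by
            rw [← Real.exp_nat_mul]
            norm_num
    · rw [if_neg hsq]
      exact hterm0
  -- cardinality bound
  have hcard : (F.card : ℝ) ≤ X / q + 1 := by
    have hsub : F ⊆ (Finset.Icc 1 N).filter (fun n => n % q = a % q ∧ 1 ∣ n) := by
      intro n hn
      simp only [hF, Finset.mem_filter] at hn ⊢
      exact ⟨hn.1, hn.2.1, one_dvd n⟩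
    have h1 : (F.card : ℝ)
        ≤ (((Finset.Icc 1 N).filter (fun n => n % q = a % q ∧ 1 ∣ n)).card : ℝ) := by
      exact_mod_cast Finset.card_le_card hsub
    have h2 := count_AP_real (N := N) (r := a) (M := q) (d := 1) hq one_pos
      (Nat.coprime_one_left q) hNX
    rw [Nat.cast_one, one_mul] at h2
    linarith
  calc ∑ n ∈ F, ((μ n : ℝ) ^ 2 * (n : ℝ) ^ 2 / (Nat.totient n : ℝ) ^ 2)
      ≤ F.card • (10000 * Real.exp 16 * LL ^ 2) := Finset.sum_le_card_nsmul F _ _ hterm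
    _ = (F.card : ℝ) * (10000 * Real.exp 16 * LL ^ 2) := by
        rw [nsmul_eq_mul]
    _ ≤ (X / q + 1) * (10000 * Real.exp 16 * LL ^ 2) := by
        apply mul_le_mul_of_nonneg_right hcard (by positivity)
    _ = (10000 * Real.exp 16) * ((X / q + 1) * LL ^ 2) := by ring

end SqPhi

namespace SqPhi
open Finset Real ArithmeticFunction

lemma gP_div_le {p : ℕ} (hp : p.Prime) :
    gP p * ((p:ℝ))⁻¹ ≤ 4 * (((p:ℝ)-1)⁻¹ - ((p:ℝ))⁻¹) := by
  have h2 : (2:ℝ) ≤ p := by exact_mod_cast hp.two_le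
  have h1 : (0:ℝ) < (p:ℝ) - 1 := by linarith
  have h0 : (0:ℝ) < (p:ℝ) := by linarith
  simp only [gP]
  rw [div_pow]
  field_simp
  ring_nf
  nlinarith [sq_nonneg ((p:ℝ) - 1)]

lemma small_prod {N : ℕ} (hN : 1 ≤ N) :
    ∏ p ∈ Nat.primesBelow (N+1), (1 + gP p * ((p:ℝ))⁻¹) ≤ Real.exp 4 := by
  have hstep : ∏ p ∈ Nat.primesBelow (N+1), (1 + gP p * ((p:ℝ))⁻¹)
      ≤ Real.exp (∑ p ∈ Nat.primesBelow (N+1), 4 * (((p:ℝ)-1)⁻¹ - ((p:ℝ))⁻¹)) := by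
    rw [Real.exp_sum]
    apply Finset.prod_le_prod
    · intro p hp
      have hpp := Nat.prime_of_mem_primesBelow hp
      have h0 : (0:ℝ) < (p:ℝ) := by exact_mod_cast hpp.pos
      have := gP_nonneg hpp
      positivity
    · intro p hp
      have hpp := Nat.prime_of_mem_primesBelow hp
      calc 1 + gP p * ((p:ℝ))⁻¹ ≤ 1 + 4 * (((p:ℝ)-1)⁻¹ - ((p:ℝ))⁻¹) := by
            have := gP_div_le hpp
            linarith
        _ ≤ Real.exp (4 * (((p:ℝ)-1)⁻¹ - ((p:ℝ))⁻¹)) := by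
            have := Real.add_one_le_exp (4 * (((p:ℝ)-1)⁻¹ - ((p:ℝ))⁻¹))
            linarith
  have hsum : ∑ p ∈ Nat.primesBelow (N+1), 4 * (((p:ℝ)-1)⁻¹ - ((p:ℝ))⁻¹) ≤ 4 := by
    rw [← Finset.mul_sum]
    have := sum_primes_inv_sub_one_sub_inv_le hN
    linarith
  calc ∏ p ∈ Nat.primesBelow (N+1), (1 + gP p * ((p:ℝ))⁻¹)
      ≤ Real.exp (∑ p ∈ Nat.primesBelow (N+1), 4 * (((p:ℝ)-1)⁻¹ - ((p:ℝ))⁻¹)) := hstep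
    _ ≤ Real.exp 4 := Real.exp_le_exp.mpr hsum

lemma GG_nonneg (D : ℕ) : 0 ≤ ∏ p ∈ D.primeFactors, gP p :=
  Finset.prod_nonneg fun p hp => gP_nonneg (Nat.prime_of_mem_primeFactors hp)

lemma bound1 (a q m : ℕ) (hq : 0 < q) (haq : Nat.Coprime a q) {X : ℝ} (hX : 1 ≤ X) :
    (∑ n ∈ (Finset.Icc 1 ⌊X⌋₊).filter (fun n => n % q = a % q ∧ Nat.Coprime n m),
      ((μ n : ℝ) ^ 2 * (n : ℝ) ^ 2 / (Nat.totient n : ℝ) ^ 2))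
    ≤ Real.exp 14 * (X / q + (Real.log (3 * X)) ^ 2) := by
  classical
  set N := ⌊X⌋₊ with hN
  set F := (Finset.Icc 1 N).filter (fun n => n % q = a % q ∧ Nat.Coprime n m) with hF
  have hN1 : 1 ≤ N := Nat.le_floor (by exact_mod_cast hX)
  have hNX : (N:ℝ) ≤ X := Nat.floor_le (by linarith)
  have hq' : (0:ℝ) < q := by exact_mod_cast hq
  have h3X : (3:ℝ) ≤ 3 * X := by linarith
  -- step 1: expand each term as a sum over divisors
  have hstep1 : (∑ n ∈ F, ((μ n : ℝ) ^ 2 * (n : ℝ) ^ 2 / (Nat.totient n : ℝ) ^ 2))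
      ≤ ∑ n ∈ F, ∑ D ∈ Finset.Icc 1 N,
          (if Squarefree D ∧ D ∣ n then ∏ p ∈ D.primeFactors, gP p else 0) := by
    apply Finset.sum_le_sum
    intro n hn
    simp only [hF, Finset.mem_filter, Finset.mem_Icc] at hn
    rw [term_eq (by omega)]
    by_cases hsq : Squarefree n
    · rw [if_pos hsq, prod_one_add_eq_sum_divisors hsq hn.1.1 hn.1.2 gP]
    · rw [if_neg hsq]
      apply Finset.sum_nonneg
      intro D hD
      by_cases h : Squarefree D ∧ D ∣ n
      · rw [if_pos h]; exact GG_nonneg D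
      · rw [if_neg h]
  -- step 2: swap and bound the counts
  have hstep2 : ∑ n ∈ F, ∑ D ∈ Finset.Icc 1 N,
        (if Squarefree D ∧ D ∣ n then ∏ p ∈ D.primeFactors, gP p else 0)
      ≤ ∑ D ∈ (Finset.Icc 1 N).filter Squarefree,
          (∏ p ∈ D.primeFactors, gP p) * (X / ((D:ℝ) * q) + 1) := by
    rw [Finset.sum_comm]
    rw [← Finset.sum_filter_add_sum_filter_not (Finset.Icc 1 N) Squarefree]
    have hzero : ∑ D ∈ (Finset.Icc 1 N).filter (fun D => ¬ Squarefree D),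
        ∑ n ∈ F, (if Squarefree D ∧ D ∣ n then ∏ p ∈ D.primeFactors, gP p else 0) = 0 := by
      apply Finset.sum_eq_zero
      intro D hD
      simp only [Finset.mem_filter] at hD
      apply Finset.sum_eq_zero
      intro n hn
      rw [if_neg (by tauto)]
    rw [hzero, add_zero]
    apply Finset.sum_le_sum
    intro D hD
    simp only [Finset.mem_filter, Finset.mem_Icc] at hD
    have hD1 : 0 < D := hD.1.1
    have hsqD : Squarefree D := hD.2
    have hinner : ∑ n ∈ F, (if Squarefree D ∧ D ∣ n then ∏ p ∈ D.primeFactors, gP p else 0)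
        = ((F.filter (fun n => D ∣ n)).card : ℝ) * ∏ p ∈ D.primeFactors, gP p := by
      have : ∀ n ∈ F, (if Squarefree D ∧ D ∣ n then ∏ p ∈ D.primeFactors, gP p else 0)
          = (if D ∣ n then ∏ p ∈ D.primeFactors, gP p else 0) := by
        intro n hn
        by_cases h : D ∣ n
        · rw [if_pos ⟨hsqD, h⟩, if_pos h]
        · rw [if_neg (by tauto), if_neg h]
      rw [Finset.sum_congr rfl this, ← Finset.sum_filter, Finset.sum_const, nsmul_eq_mul]
    rw [hinner]
    rcases Finset.eq_empty_or_nonempty (F.filter (fun n => D ∣ n)) with he | hne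
    · rw [he]
      simp only [Finset.card_empty, Nat.cast_zero, zero_mul]
      have h1 : (0:ℝ) ≤ X / ((D:ℝ) * q) + 1 := by positivity
      have h2 := GG_nonneg D
      positivity
    · -- nonempty: D is coprime to q
      obtain ⟨n₀, hn₀⟩ := hne
      simp only [Finset.mem_filter, hF, Finset.mem_Icc] at hn₀
      have hn₀q : Nat.Coprime n₀ q := by
        have h1 : Nat.gcd q n₀ = Nat.gcd q a := by
          rw [Nat.gcd_rec q n₀, Nat.gcd_rec q a, hn₀.1.2.1]
        have h2 : Nat.gcd q a = 1 := Nat.Coprime.gcd_eq_one (Nat.Coprime.symm haq)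
        exact Nat.Coprime.symm (by rw [Nat.Coprime, h1, h2])
      have hDq : Nat.Coprime D q := Nat.Coprime.coprime_dvd_left hn₀.2 hn₀q
      have hcard : ((F.filter (fun n => D ∣ n)).card : ℝ) ≤ X / ((D:ℝ) * q) + 1 := by
        have hsub : F.filter (fun n => D ∣ n)
            ⊆ (Finset.Icc 1 N).filter (fun n => n % q = a % q ∧ D ∣ n) := by
          intro n hn
          simp only [Finset.mem_filter, hF] at hn ⊢
          exact ⟨hn.1.1, hn.1.2.1, hn.2⟩
        have h1 : ((F.filter (fun n => D ∣ n)).card : ℝ)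
            ≤ (((Finset.Icc 1 N).filter (fun n => n % q = a % q ∧ D ∣ n)).card : ℝ) := by
          exact_mod_cast Finset.card_le_card hsub
        have h2 := count_AP_real (N := N) (r := a) (M := q) (d := D) hq hD1 hDq hNX
        linarith
      have := GG_nonneg D
      calc ((F.filter (fun n => D ∣ n)).card : ℝ) * ∏ p ∈ D.primeFactors, gP p
          ≤ (X / ((D:ℝ) * q) + 1) * ∏ p ∈ D.primeFactors, gP p := by
            apply mul_le_mul_of_nonneg_right hcard this
        _ = (∏ p ∈ D.primeFactors, gP p) * (X / ((D:ℝ) * q) + 1) := by ring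
  -- step 3: split and bound the two sums
  have hsplit : ∑ D ∈ (Finset.Icc 1 N).filter Squarefree,
        (∏ p ∈ D.primeFactors, gP p) * (X / ((D:ℝ) * q) + 1)
      = (X / q) * (∑ D ∈ (Finset.Icc 1 N).filter Squarefree,
            ∏ p ∈ D.primeFactors, (gP p * ((p:ℝ))⁻¹))
        + ∑ D ∈ (Finset.Icc 1 N).filter Squarefree, ∏ p ∈ D.primeFactors, gP p := by
    rw [Finset.mul_sum, ← Finset.sum_add_distrib]
    apply Finset.sum_congr rfl
    intro D hD
    simp only [Finset.mem_filter, Finset.mem_Icc] at hD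
    have hD1 : 0 < D := hD.1.1
    have hD' : (0:ℝ) < (D:ℝ) := by exact_mod_cast hD1
    have hDprod : ((D:ℝ)) = ∏ p ∈ D.primeFactors, (p:ℝ) := by
      rw [← Nat.cast_prod, Nat.prod_primeFactors_of_squarefree hD.2]
    have hexp : ∏ p ∈ D.primeFactors, (gP p * ((p:ℝ))⁻¹)
        = (∏ p ∈ D.primeFactors, gP p) * ((D:ℝ))⁻¹ := by
      rw [Finset.prod_mul_distrib, hDprod, ← Finset.prod_inv_distrib]
    rw [hexp]
    field_simp
  -- bound first sum
  have hsum1 : ∑ D ∈ (Finset.Icc 1 N).filter Squarefree,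
      ∏ p ∈ D.primeFactors, (gP p * ((p:ℝ))⁻¹) ≤ Real.exp 4 := by
    calc ∑ D ∈ (Finset.Icc 1 N).filter Squarefree,
          ∏ p ∈ D.primeFactors, (gP p * ((p:ℝ))⁻¹)
        ≤ ∏ p ∈ Nat.primesBelow (N+1), (1 + gP p * ((p:ℝ))⁻¹) := by
          apply sum_squarefree_le_prod
          intro p hp
          have h0 : (0:ℝ) < (p:ℝ) := by exact_mod_cast hp.pos
          have := gP_nonneg hp
          positivity
      _ ≤ Real.exp 4 := small_prod hN1
  -- bound second sum
  have hsum2 : ∑ D ∈ (Finset.Icc 1 N).filter Squarefree,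
      ∏ p ∈ D.primeFactors, gP p ≤ (Real.exp 7 * Real.log (3*X)) ^ 2 := by
    calc ∑ D ∈ (Finset.Icc 1 N).filter Squarefree, ∏ p ∈ D.primeFactors, gP p
        ≤ ∏ p ∈ Nat.primesBelow (N+1), (1 + gP p) := by
          apply sum_squarefree_le_prod
          intro p hp
          exact gP_nonneg hp
      _ = (∏ p ∈ Nat.primesBelow (N+1), ((p:ℝ)/((p:ℝ)-1))) ^ 2 := by
          rw [← Finset.prod_pow]
          exact Finset.prod_congr rfl fun p hp =>
            one_add_gP (Nat.prime_of_mem_primesBelow hp)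
      _ ≤ (Real.exp 7 * Real.log (3*X)) ^ 2 := by
          apply pow_le_pow_left₀
          · apply Finset.prod_nonneg
            intro p hp
            have h2 : (2:ℝ) ≤ p := by
              exact_mod_cast (Nat.prime_of_mem_primesBelow hp).two_le
            have : (0:ℝ) < (p:ℝ) - 1 := by linarith
            positivity
          · exact mertens3 hN1 (by linarith) h3X
  -- combine
  have he4 : Real.exp 4 ≤ Real.exp 14 := Real.exp_le_exp.mpr (by norm_num)
  have he14 : (Real.exp 7) ^ 2 = Real.exp 14 := by
    rw [← Real.exp_nat_mul]
    norm_num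
  have hXq : (0:ℝ) ≤ X / q := by positivity
  have hlog0 : (0:ℝ) ≤ Real.log (3*X) := by
    have := one_le_log h3X
    linarith
  calc (∑ n ∈ F, ((μ n : ℝ) ^ 2 * (n : ℝ) ^ 2 / (Nat.totient n : ℝ) ^ 2))
      ≤ (X / q) * (∑ D ∈ (Finset.Icc 1 N).filter Squarefree,
            ∏ p ∈ D.primeFactors, (gP p * ((p:ℝ))⁻¹))
        + ∑ D ∈ (Finset.Icc 1 N).filter Squarefree, ∏ p ∈ D.primeFactors, gP p := by
        rw [← hsplit]
        exact le_trans hstep1 hstep2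
    _ ≤ (X / q) * Real.exp 4 + (Real.exp 7 * Real.log (3*X)) ^ 2 := by
        have h1 : (X / q) * (∑ D ∈ (Finset.Icc 1 N).filter Squarefree,
            ∏ p ∈ D.primeFactors, (gP p * ((p:ℝ))⁻¹)) ≤ (X / q) * Real.exp 4 :=
          mul_le_mul_of_nonneg_left hsum1 hXq
        linarith
    _ ≤ Real.exp 14 * (X / q + (Real.log (3*X)) ^ 2) := by
        have h1 : (X / q) * Real.exp 4 ≤ (X / q) * Real.exp 14 :=
          mul_le_mul_of_nonneg_left he4 hXq
        have h2 : (Real.exp 7 * Real.log (3*X)) ^ 2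
            = Real.exp 14 * (Real.log (3*X))^2 := by
          rw [mul_pow, he14]
        nlinarith [Real.exp_pos (14:ℝ)]

end SqPhi

open scoped ArithmeticFunction

theorem sum_sq_over_phi_sq_in_progression_le :
    ∃ C > 0, ∀ a q m : ℕ, 0 < a → 0 < q → 0 < m →
      Nat.gcd a (q * m) = 1 → Nat.gcd q m = 1 → ∀ X : ℝ, 1 ≤ X →
      (∑ n ∈ (Finset.Icc 1 ⌊X⌋₊).filter
          (fun n => n % q = a % q ∧ Nat.Coprime n m),
        ((μ n : ℝ) ^ 2 * (n : ℝ) ^ 2 / (Nat.totient n : ℝ) ^ 2))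
      ≤ C * min (X / q + (Real.log (3 * X)) ^ 2)
          ((X / q + 1) * (Real.log (Real.log (3 * X))) ^ 2) := by
  refine ⟨Real.exp 14 + 10000 * Real.exp 16, by positivity, ?_⟩
  intro a q m ha hq hm haqm hqm X hX
  have haq : Nat.Coprime a q := (Nat.coprime_mul_iff_right.mp haqm).1
  have hq' : (0:ℝ) < q := by exact_mod_cast hq
  have h3X : (3:ℝ) ≤ 3 * X := by linarith
  set C := Real.exp 14 + 10000 * Real.exp 16 with hC
  set B₁ := X / q + (Real.log (3 * X)) ^ 2 with hB₁
  set B₂ := (X / q + 1) * (Real.log (Real.log (3 * X))) ^ 2 with hB₂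
  have hB₁0 : 0 ≤ B₁ := by
    have : (0:ℝ) ≤ X / q := by positivity
    have : (0:ℝ) ≤ (Real.log (3*X))^2 := sq_nonneg _
    simp only [hB₁]
    linarith
  have hB₂0 : 0 ≤ B₂ := by
    have h1 : (0:ℝ) ≤ X / q := by positivity
    have h2 : (0:ℝ) ≤ (Real.log (Real.log (3*X)))^2 := sq_nonneg _
    simp only [hB₂]
    nlinarith
  have hS₁ := SqPhi.bound1 a q m hq haq hX
  have hS₂ := SqPhi.bound2 a q m hq hX
  have hmin : C * min B₁ B₂ = min (C * B₁) (C * B₂) := by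
    apply mul_min_of_nonneg
    positivity
  rw [hmin]
  apply le_min
  · calc _ ≤ Real.exp 14 * B₁ := hS₁
      _ ≤ C * B₁ := by
        apply mul_le_mul_of_nonneg_right _ hB₁0
        simp only [hC]
        nlinarith [Real.exp_pos (16:ℝ)]
  · calc _ ≤ (10000 * Real.exp 16) * B₂ := hS₂
      _ ≤ C * B₂ := by
        apply mul_le_mul_of_nonneg_right _ hB₂0
        simp only [hC]
        nlinarith [Real.exp_pos (14:ℝ)]
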